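/- Let Z ∈ ℝ^{n×n} be a symmetric positive semidefinite matrix and A ∈ ℝ^{m×n} such that ker(Z) = range(A^T) and Z is positive definite on ker(A). Then for every x ∈ ker(A), the extended dual norm satisfies ‖x‖_Z^* := sup{ ⟨x, u⟩ : u ∈ ℝ^n, u^T Z u ≤ 1 } = √(x^T Z† x), where Z† is the Moore–Penrose pseudoinverse of Z. -/

import Mathlib

open Matrix

-- The Moore–Penrose pseudoinverse of a real matrix, defined via the four
-- Penrose conditions (which have a unique solution for every real matrix).
open Classical in
noncomputable def mpinv {k l : Type*} [Fintype k] [Fintype l] (B : Matrix k l ℝ) :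
    Matrix l k ℝ :=
  if h : ∃ X : Matrix l k ℝ,
      B * X * B = B ∧ X * B * X = X ∧ (B * X)ᵀ = B * X ∧ (X * B)ᵀ = X * B
  then h.choose else 0

/-- `P_S = I - (AS)†(AS)`, the orthogonal projection onto `ker(AS)`. -/
noncomputable def Pmat {m n p : ℕ} (A : Matrix (Fin m) (Fin n) ℝ)
    (S : Matrix (Fin n) (Fin p) ℝ) : Matrix (Fin p) (Fin p) ℝ :=
  1 - mpinv (A * S) * (A * S)

/-- `Z_S = S P_S (P_Sᵀ Sᵀ M S P_S)† P_Sᵀ Sᵀ`. -/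
noncomputable def Zmat {m n p : ℕ} (A : Matrix (Fin m) (Fin n) ℝ)
    (M : Matrix (Fin n) (Fin n) ℝ) (S : Matrix (Fin n) (Fin p) ℝ) :
    Matrix (Fin n) (Fin n) ℝ :=
  S * Pmat A S * mpinv ((Pmat A S)ᵀ * Sᵀ * M * S * Pmat A S) * (Pmat A S)ᵀ * Sᵀ

/-- The gradient of `f : ℝ^n → ℝ`, as a vector of partial derivatives. -/
noncomputable def gradv {n : ℕ} (f : (Fin n → ℝ) → ℝ) (x : Fin n → ℝ) : Fin n → ℝ :=
  fun i => fderiv ℝ f x (Pi.single i 1)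

/-- Uniqueness of the Moore–Penrose pseudoinverse. -/
theorem penrose_unique' (B : Matrix k l ℝ) [Fintype k] [Fintype l] (X Y : Matrix l k ℝ)
    (h1 : B * X * B = B) (h2 : X * B * X = X) (h3 : (B * X)ᵀ = B * X) (h4 : (X * B)ᵀ = X * B)
    (g1 : B * Y * B = B) (g2 : Y * B * Y = Y) (g3 : (B * Y)ᵀ = B * Y) (g4 : (Y * B)ᵀ = Y * B) :
    X = Y := by
  have hBXY : B * X = B * Y := by
    calc B * X = (B * X)ᵀ := h3.symm
      _ = Xᵀ * Bᵀ := Matrix.transpose_mul _ _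
      _ = Xᵀ * (B * Y * B)ᵀ := by rw [g1]
      _ = Xᵀ * (Bᵀ * (B * Y)ᵀ) := by rw [Matrix.transpose_mul (B * Y) B]
      _ = (Xᵀ * Bᵀ) * (B * Y)ᵀ := by rw [Matrix.mul_assoc]
      _ = (B * X)ᵀ * (B * Y)ᵀ := by rw [← Matrix.transpose_mul B X]
      _ = (B * X) * (B * Y) := by rw [h3, g3]
      _ = (B * X * B) * Y := by rw [Matrix.mul_assoc, Matrix.mul_assoc, Matrix.mul_assoc]
      _ = B * Y := by rw [h1]
  have hXYB : X * B = Y * B := by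
    calc X * B = (X * B)ᵀ := h4.symm
      _ = Bᵀ * Xᵀ := Matrix.transpose_mul _ _
      _ = (B * Y * B)ᵀ * Xᵀ := by rw [g1]
      _ = ((Y * B)ᵀ * Bᵀ) * Xᵀ := by
            rw [Matrix.mul_assoc B Y B, Matrix.transpose_mul B (Y * B)]
      _ = (Y * B)ᵀ * (X * B)ᵀ := by rw [Matrix.mul_assoc, ← Matrix.transpose_mul X B]
      _ = (Y * B) * (X * B) := by rw [h4, g4]
      _ = Y * (B * X * B) := by rw [Matrix.mul_assoc, Matrix.mul_assoc]
      _ = Y * B := by rw [h1]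
  calc X = X * B * X := h2.symm
    _ = X * (B * Y) := by rw [Matrix.mul_assoc, hBXY]
    _ = (Y * B) * Y := by rw [← Matrix.mul_assoc, hXYB]
    _ = Y := g2

/-- If `X` satisfies the four Penrose conditions for `B`, then `mpinv B = X`. -/
theorem mpinv_eq_of_penrose {k l : Type*} [Fintype k] [Fintype l] (B : Matrix k l ℝ)
    (X : Matrix l k ℝ)
    (h1 : B * X * B = B) (h2 : X * B * X = X) (h3 : (B * X)ᵀ = B * X) (h4 : (X * B)ᵀ = X * B) :
    mpinv B = X := by
  have hex : ∃ X : Matrix l k ℝ,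
      B * X * B = B ∧ X * B * X = X ∧ (B * X)ᵀ = B * X ∧ (X * B)ᵀ = X * B := ⟨X, h1, h2, h3, h4⟩
  rw [mpinv, dif_pos hex]
  obtain ⟨c1, c2, c3, c4⟩ := hex.choose_spec
  exact penrose_unique' B _ X c1 c2 c3 c4 h1 h2 h3 h4

/-- A real symmetric matrix has a symmetric Penrose pseudoinverse. -/
theorem exists_penrose_symm {n : Type*} [Fintype n] [DecidableEq n] {Z : Matrix n n ℝ}
    (hZ : Z.IsHermitian) :
    ∃ X : Matrix n n ℝ, Z * X * Z = Z ∧ X * Z * X = X ∧ (Z * X)ᵀ = Z * X ∧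
      (X * Z)ᵀ = X * Z ∧ Xᵀ = X := by
  set U : Matrix n n ℝ := (IsHermitian.eigenvectorUnitary hZ : Matrix n n ℝ) with hU
  have hUU : Uᵀ * U = 1 := by
    have := Unitary.coe_star_mul_self (IsHermitian.eigenvectorUnitary hZ)
    rwa [← Matrix.conjTranspose_eq_transpose_of_trivial]
  set d : n → ℝ := hZ.eigenvalues with hd
  have hspec : Z = U * diagonal d * Uᵀ := by
    have := hZ.spectral_theorem
    rw [← Matrix.conjTranspose_eq_transpose_of_trivial]
    simpa [hU, hd, Matrix.star_eq_conjTranspose] using this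
  have key : ∀ e f : n → ℝ,
      (U * diagonal e * Uᵀ) * (U * diagonal f * Uᵀ) = U * diagonal (fun i => e i * f i) * Uᵀ := by
    intro e f
    calc (U * diagonal e * Uᵀ) * (U * diagonal f * Uᵀ)
        = U * diagonal e * (Uᵀ * U) * (diagonal f * Uᵀ) := by
          simp only [Matrix.mul_assoc]
      _ = U * (diagonal e * diagonal f) * Uᵀ := by
          rw [hUU, Matrix.mul_one]; simp only [Matrix.mul_assoc]
      _ = U * diagonal (fun i => e i * f i) * Uᵀ := by
          rw [Matrix.diagonal_mul_diagonal]
  have keyT : ∀ e : n → ℝ, (U * diagonal e * Uᵀ)ᵀ = U * diagonal e * Uᵀ := by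
    intro e
    rw [Matrix.transpose_mul, Matrix.transpose_mul, Matrix.transpose_transpose,
      Matrix.diagonal_transpose, Matrix.mul_assoc]
  refine ⟨U * diagonal (fun i => (d i)⁻¹) * Uᵀ, ?_, ?_, ?_, ?_, keyT _⟩
  · rw [hspec, key, key]
    congr 1
    congr 1
    funext i j
    rcases eq_or_ne (d i) 0 with h | h
    · simp [Matrix.diagonal_apply, h]
    · simp only [Matrix.diagonal_apply]
      split_ifs with hij
      · field_simp
      · rfl
  · rw [hspec, key, key]
    congr 1
    congr 1
    funext i j
    rcases eq_or_ne (d i) 0 with h | h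
    · simp [Matrix.diagonal_apply, h]
    · simp only [Matrix.diagonal_apply]
      split_ifs with hij
      · field_simp
      · rfl
  · rw [hspec, key, keyT]
  · rw [hspec, key, keyT]

/-- for `x ∈ ker(A)`, the extended dual norm
`‖x‖_Z^* = sup{⟨x,u⟩ : uᵀZu ≤ 1}` equals `√(xᵀ Z† x)`. -/
theorem stmt4 {m n : ℕ} (A : Matrix (Fin m) (Fin n) ℝ)
    (Z : Matrix (Fin n) (Fin n) ℝ) (hZ : Z.PosSemidef)
    (hker : ∀ u : Fin n → ℝ, Z.mulVec u = 0 ↔ ∃ y : Fin m → ℝ, Aᵀ.mulVec y = u)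
    (hpd : ∀ u : Fin n → ℝ, A.mulVec u = 0 → u ≠ 0 → 0 < u ⬝ᵥ Z.mulVec u)
    (x : Fin n → ℝ) (hx : A.mulVec x = 0) :
    sSup {r : ℝ | ∃ u : Fin n → ℝ, u ⬝ᵥ Z.mulVec u ≤ 1 ∧ r = x ⬝ᵥ u} =
      Real.sqrt (x ⬝ᵥ (mpinv Z).mulVec x) := by
  obtain ⟨X, p1, p2, p3, p4, p5⟩ := exists_penrose_symm hZ.1
  have hMdef : mpinv Z = X := mpinv_eq_of_penrose Z X p1 p2 p3 p4
  rw [hMdef]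
  have hZsymm : Zᵀ = Z := by
    rw [← Matrix.conjTranspose_eq_transpose_of_trivial]; exact hZ.1
  -- swap lemma for symmetric matrices
  have hswap : ∀ (W : Matrix (Fin n) (Fin n) ℝ), Wᵀ = W →
      ∀ u v : Fin n → ℝ, u ⬝ᵥ W *ᵥ v = (W *ᵥ u) ⬝ᵥ v := by
    intro W hW u v
    rw [Matrix.dotProduct_mulVec]
    nth_rewrite 1 [← hW]
    rw [Matrix.vecMul_transpose]
  have hZXcomm : Z * X = X * Z := by
    calc Z * X = (Z * X)ᵀ := p3.symm
      _ = Xᵀ * Zᵀ := Matrix.transpose_mul _ _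
      _ = X * Z := by rw [p5, hZsymm]
  -- A * Z = 0
  have hZAT : Z * Aᵀ = 0 := by
    ext i j
    have h0 : Z *ᵥ (Aᵀ *ᵥ Pi.single j 1) = 0 := (hker _).mpr ⟨Pi.single j 1, rfl⟩
    have h1 : (Z * Aᵀ) *ᵥ Pi.single j 1 = 0 := by
      rw [← Matrix.mulVec_mulVec, h0]
    have := congrFun h1 i
    simpa [Matrix.mulVec_single] using this
  have hAZ : A * Z = 0 := by
    have := congrArg Matrix.transpose hZAT
    simpa [Matrix.transpose_mul, hZsymm] using this
  -- Z (X x) = x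
  have hfix : Z *ᵥ (X *ᵥ x) = x := by
    set w : Fin n → ℝ := x - Z *ᵥ (X *ᵥ x) with hw
    have hZZX : Z * (Z * X) = Z := by
      rw [hZXcomm, ← Matrix.mul_assoc, p1]
    have hZw : Z *ᵥ w = 0 := by
      rw [hw, Matrix.mulVec_sub, Matrix.mulVec_mulVec, Matrix.mulVec_mulVec,
        Matrix.mul_assoc, hZZX, sub_self]
    have hAw : A *ᵥ w = 0 := by
      rw [hw, Matrix.mulVec_sub, hx, Matrix.mulVec_mulVec, hAZ]
      simp
    have hw0 : w = 0 := by
      by_contra hne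
      have := hpd w hAw hne
      rw [hZw] at this
      simp at this
    have := sub_eq_zero.mp hw0
    exact this.symm
  -- basic quadratic identities
  have hXxZ : x ⬝ᵥ X *ᵥ x = (X *ᵥ x) ⬝ᵥ Z *ᵥ (X *ᵥ x) := by
    calc x ⬝ᵥ X *ᵥ x = (X *ᵥ x) ⬝ᵥ x := dotProduct_comm _ _
      _ = (X *ᵥ x) ⬝ᵥ Z *ᵥ (X *ᵥ x) := by rw [hfix]
  have hZnn : ∀ v : Fin n → ℝ, 0 ≤ v ⬝ᵥ Z *ᵥ v := by
    intro v
    have := hZ.dotProduct_mulVec_nonneg v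
    simpa using this
  have hc0 : 0 ≤ x ⬝ᵥ X *ᵥ x := by rw [hXxZ]; exact hZnn _
  set c : ℝ := Real.sqrt (x ⬝ᵥ X *ᵥ x) with hc
  -- square root of Z
  open scoped MatrixOrder in
  set s : Matrix (Fin n) (Fin n) ℝ := CFC.sqrt Z with hs
  open scoped MatrixOrder in
  have hss : s * s = Z := CFC.sqrt_mul_sqrt_self Z hZ.nonneg
  have hssymm : sᵀ = s := by
    rw [← Matrix.conjTranspose_eq_transpose_of_trivial]; exact (open scoped MatrixOrder in (CFC.sqrt_nonneg Z).posSemidef.1)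
  -- upper bound
  have hub : ∀ r ∈ {r : ℝ | ∃ u : Fin n → ℝ, u ⬝ᵥ Z.mulVec u ≤ 1 ∧ r = x ⬝ᵥ u}, r ≤ c := by
    rintro r ⟨u, hu, rfl⟩
    set a : Fin n → ℝ := s *ᵥ (X *ᵥ x) with ha
    set b : Fin n → ℝ := s *ᵥ u with hb
    have hxu : x ⬝ᵥ u = a ⬝ᵥ b := by
      calc x ⬝ᵥ u = (Z *ᵥ (X *ᵥ x)) ⬝ᵥ u := by rw [hfix]
        _ = (s *ᵥ (s *ᵥ (X *ᵥ x))) ⬝ᵥ u := by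
              conv_rhs => rw [Matrix.mulVec_mulVec, hss]
        _ = (s *ᵥ (X *ᵥ x)) ⬝ᵥ (s *ᵥ u) := (hswap s hssymm (s *ᵥ (X *ᵥ x)) u).symm
        _ = a ⬝ᵥ b := rfl
    have haa : a ⬝ᵥ a = x ⬝ᵥ X *ᵥ x := by
      calc a ⬝ᵥ a = (X *ᵥ x) ⬝ᵥ (s *ᵥ (s *ᵥ (X *ᵥ x))) :=
            (hswap s hssymm (X *ᵥ x) (s *ᵥ (X *ᵥ x))).symm
        _ = (X *ᵥ x) ⬝ᵥ Z *ᵥ (X *ᵥ x) := by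
            conv_lhs => rw [Matrix.mulVec_mulVec, hss]
        _ = x ⬝ᵥ X *ᵥ x := hXxZ.symm
    have hbb : b ⬝ᵥ b = u ⬝ᵥ Z *ᵥ u := by
      calc b ⬝ᵥ b = u ⬝ᵥ (s *ᵥ (s *ᵥ u)) := (hswap s hssymm u (s *ᵥ u)).symm
        _ = u ⬝ᵥ Z *ᵥ u := by conv_lhs => rw [Matrix.mulVec_mulVec, hss]
    have hbb0 : 0 ≤ b ⬝ᵥ b := by rw [hbb]; exact hZnn u
    have hCS : (a ⬝ᵥ b) ^ 2 ≤ (a ⬝ᵥ a) * (b ⬝ᵥ b) := by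
      have := Finset.sum_mul_sq_le_sq_mul_sq Finset.univ a b
      simpa [dotProduct, sq] using this
    have h2 : (x ⬝ᵥ u) ^ 2 ≤ x ⬝ᵥ X *ᵥ x := by
      rw [hxu]
      calc (a ⬝ᵥ b) ^ 2 ≤ (a ⬝ᵥ a) * (b ⬝ᵥ b) := hCS
        _ ≤ (a ⬝ᵥ a) * 1 := by
              apply mul_le_mul_of_nonneg_left _ (by rw [haa]; exact hc0)
              rw [hbb]; exact hu
        _ = x ⬝ᵥ X *ᵥ x := by rw [mul_one, haa]
    calc x ⬝ᵥ u ≤ |x ⬝ᵥ u| := le_abs_self _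
      _ = Real.sqrt ((x ⬝ᵥ u) ^ 2) := (Real.sqrt_sq_eq_abs _).symm
      _ ≤ c := Real.sqrt_le_sqrt h2
  -- membership
  have hmem : c ∈ {r : ℝ | ∃ u : Fin n → ℝ, u ⬝ᵥ Z.mulVec u ≤ 1 ∧ r = x ⬝ᵥ u} := by
    rcases eq_or_lt_of_le hc0 with h0 | hpos
    · -- x ⬝ᵥ X x = 0 forces x = 0
      have hZXx : Z *ᵥ (X *ᵥ x) = 0 := by
        have h00 : (X *ᵥ x) ⬝ᵥ Z *ᵥ (X *ᵥ x) = 0 := by rw [← hXxZ]; exact h0.symm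
        have h0' : star (X *ᵥ x) ⬝ᵥ Z *ᵥ (X *ᵥ x) = 0 := by simpa using h00
        exact (hZ.dotProduct_mulVec_zero_iff (X *ᵥ x)).mp h0'
      have hx0 : x = 0 := by rw [← hfix, hZXx]
      refine ⟨0, by simp, ?_⟩
      rw [hx0, hc]
      have : x ⬝ᵥ X *ᵥ x = 0 := h0.symm
      rw [this, Real.sqrt_zero]
      simp
    · have hcpos : 0 < c := Real.sqrt_pos.mpr hpos
      have hcsq : c ^ 2 = x ⬝ᵥ X *ᵥ x := Real.sq_sqrt hpos.le
      refine ⟨c⁻¹ • (X *ᵥ x), ?_, ?_⟩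
      · have : (c⁻¹ • (X *ᵥ x)) ⬝ᵥ Z *ᵥ (c⁻¹ • (X *ᵥ x)) =
            c⁻¹ * (c⁻¹ * ((X *ᵥ x) ⬝ᵥ Z *ᵥ (X *ᵥ x))) := by
          rw [Matrix.mulVec_smul, smul_dotProduct, dotProduct_smul]
          simp [smul_eq_mul]
        rw [this, ← hXxZ, ← hcsq]
        rw [sq]
        field_simp
        exact le_refl 1
      · rw [dotProduct_smul]
        have : x ⬝ᵥ X *ᵥ x = c * c := by rw [← hcsq, sq]
        rw [this]
        rw [smul_eq_mul]
        field_simp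
  exact IsGreatest.csSup_eq ⟨hmem, hub⟩
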